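/- Suppose each u_i is β-smooth on the ball B(θ, d) (i.e., u_i(θ') ≤ u_i(θ) + ∇u_i(θ)ᵀ(θ'−θ) + (β/2)‖θ'−θ‖² for ‖θ'−θ‖ ≤ d), the gradient of L(θ) = Σ_i log u_i(θ) satisfies ‖∇L(θ)‖₂ ≤ ε, and d = (−ε + √(ε² + 2β(k−1)n·Σ_i u_i(θ)⁻¹)) / (β·Σ_i u_i(θ)⁻¹). Then for every θ' with ‖θ'−θ‖₂ < d, we have Σ_{i∈[n]} u_i(θ')/u_i(θ) < k·n. -/

import Mathlib

private lemma aux_quad (n k ε β S d r : ℝ) (hε : 0 ≤ ε) (hβS : 0 < β * S)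
    (hkey : (k - 1) * n = β * S / 2 * d ^ 2 + ε * d)
    (hr0 : 0 ≤ r) (hrd : r < d) (h2 : r ^ 2 < d ^ 2) :
    n + ε * r + S * (β / 2 * r ^ 2) < k * n := by
  nlinarith [mul_le_mul_of_nonneg_left hrd.le hε, mul_lt_mul_of_pos_left h2 hβS]


/-- Under β-smoothness of each `u i` on the ball of radius `d` around `θ`,
an ε-bound on the gradient of `L = ∑ i log (u i ·)`, and the stated value of `d`,
every `θ'` with `‖θ' - θ‖ < d` satisfies `∑ i, u i θ' / u i θ < k·n`. -/
theorem smooth_approx_stationary_sum_ratio_lt_kn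
    {p : ℕ} (n : ℕ) (u : Fin n → EuclideanSpace ℝ (Fin p) → ℝ)
    (hpos : ∀ i θ, 0 < u i θ)
    (hdiff : ∀ i, Differentiable ℝ (u i))
    (β k ε d : ℝ) (hβ : 0 < β) (hk : 1 < k) (hε : 0 ≤ ε)
    (θ : EuclideanSpace ℝ (Fin p))
    (hsmooth : ∀ i, ∀ θ' : EuclideanSpace ℝ (Fin p), ‖θ' - θ‖ ≤ d →
      u i θ' ≤ u i θ + inner ℝ (gradient (u i) θ) (θ' - θ) + β / 2 * ‖θ' - θ‖ ^ 2)
    (hgrad : ‖∑ i : Fin n, (u i θ)⁻¹ • gradient (u i) θ‖ ≤ ε)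
    (hd : d = (-ε + Real.sqrt (ε ^ 2 + 2 * β * (k - 1) * n * ∑ i : Fin n, (u i θ)⁻¹)) /
      (β * ∑ i : Fin n, (u i θ)⁻¹)) :
    ∀ θ' : EuclideanSpace ℝ (Fin p), ‖θ' - θ‖ < d →
      ∑ i : Fin n, u i θ' / u i θ < k * n := by
  intro θ' hθ'
  rcases Nat.eq_zero_or_pos n with hn | hn
  · exfalso
    subst hn
    have hd0 : d = 0 := by
      rw [hd]
      simp [Real.sqrt_sq hε]
    rw [hd0] at hθ'
    exact absurd hθ' (not_lt.2 (norm_nonneg _))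
  · set S := ∑ i : Fin n, (u i θ)⁻¹ with hSdef
    have hS : 0 < S := Finset.sum_pos (fun i _ => inv_pos.2 (hpos i θ))
      (Finset.univ_nonempty_iff.2 (Fin.pos_iff_nonempty.1 hn))
    have hβS : 0 < β * S := mul_pos hβ hS
    set t := Real.sqrt (ε ^ 2 + 2 * β * (k - 1) * n * S) with htdef
    have hnpos : (0:ℝ) < n := Nat.cast_pos.2 hn
    have hk1 : (0:ℝ) < k - 1 := by linarith
    have hrest : 0 < 2 * β * (k - 1) * n * S := by positivity
    have ht2 : t ^ 2 = ε ^ 2 + 2 * β * (k - 1) * n * S :=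
      Real.sq_sqrt (by positivity)
    have htnn : 0 ≤ t := Real.sqrt_nonneg _
    have htε : ε < t := by nlinarith
    have hdβ : β * S * d = t - ε := by
      rw [hd]; field_simp; ring
    have hdpos : 0 < d := by
      have h : 0 < β * S * d := by rw [hdβ]; linarith
      by_contra hc
      push_neg at hc
      nlinarith
    set r := ‖θ' - θ‖ with hrdef
    have hr0 : 0 ≤ r := norm_nonneg _
    have hrd : r < d := hθ'
    -- per-term bound
    have h1 : ∀ i, u i θ' / u i θ ≤
        1 + (u i θ)⁻¹ * inner ℝ (gradient (u i) θ) (θ' - θ) + (u i θ)⁻¹ * (β / 2 * r ^ 2) := by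
      intro i
      have hs := hsmooth i θ' hrd.le
      have hc : (u i θ)⁻¹ * u i θ = 1 := inv_mul_cancel₀ (hpos i θ).ne'
      calc u i θ' / u i θ = (u i θ)⁻¹ * u i θ' := by rw [div_eq_inv_mul]
        _ ≤ (u i θ)⁻¹ * (u i θ + inner ℝ (gradient (u i) θ) (θ' - θ) + β / 2 * r ^ 2) :=
            mul_le_mul_of_nonneg_left hs (inv_nonneg.2 (hpos i θ).le)
        _ = 1 + (u i θ)⁻¹ * inner ℝ (gradient (u i) θ) (θ' - θ) + (u i θ)⁻¹ * (β / 2 * r ^ 2) := by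
            rw [mul_add, mul_add, hc]
    have hsum : ∑ i : Fin n, u i θ' / u i θ ≤
        n + (inner ℝ (∑ i : Fin n, (u i θ)⁻¹ • gradient (u i) θ) (θ' - θ) : ℝ)
          + S * (β / 2 * r ^ 2) := by
      calc ∑ i : Fin n, u i θ' / u i θ
          ≤ ∑ i : Fin n, (1 + (u i θ)⁻¹ * inner ℝ (gradient (u i) θ) (θ' - θ)
              + (u i θ)⁻¹ * (β / 2 * r ^ 2)) := Finset.sum_le_sum (fun i _ => h1 i)
        _ = n + (∑ i : Fin n, (u i θ)⁻¹ * inner ℝ (gradient (u i) θ) (θ' - θ))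
              + S * (β / 2 * r ^ 2) := by
            rw [Finset.sum_add_distrib, Finset.sum_add_distrib, Finset.sum_const,
              Finset.card_univ, Fintype.card_fin, ← Finset.sum_mul]
            simp [hSdef]
        _ = n + (inner ℝ (∑ i : Fin n, (u i θ)⁻¹ • gradient (u i) θ) (θ' - θ) : ℝ)
              + S * (β / 2 * r ^ 2) := by
            rw [sum_inner]
            congr 2
            exact Finset.sum_congr rfl fun i _ => (real_inner_smul_left _ _ _).symm
    have hinner : (inner ℝ (∑ i : Fin n, (u i θ)⁻¹ • gradient (u i) θ) (θ' - θ) : ℝ) ≤ ε * r := by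
      calc (inner ℝ (∑ i : Fin n, (u i θ)⁻¹ • gradient (u i) θ) (θ' - θ) : ℝ)
          ≤ ‖∑ i : Fin n, (u i θ)⁻¹ • gradient (u i) θ‖ * r := real_inner_le_norm _ _
        _ ≤ ε * r := mul_le_mul_of_nonneg_right hgrad hr0
    -- key quadratic identity
    have hkey2 : 2 * β * S * ((k - 1) * n) = 2 * β * S * (β * S / 2 * d ^ 2 + ε * d) := by
      have ht' : t = β * S * d + ε := by linarith
      have h := ht2
      rw [ht'] at h
      linear_combination -h
    have hkey : (k - 1) * n = β * S / 2 * d ^ 2 + ε * d :=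
      mul_left_cancel₀ (by positivity) hkey2
    have h2 : r ^ 2 < d ^ 2 := by nlinarith
    have hfinal : (n:ℝ) + ε * r + S * (β / 2 * r ^ 2) < k * n :=
      aux_quad n k ε β S d r hε hβS hkey hr0 hrd h2
    calc ∑ i : Fin n, u i θ' / u i θ
        ≤ n + (inner ℝ (∑ i : Fin n, (u i θ)⁻¹ • gradient (u i) θ) (θ' - θ) : ℝ)
          + S * (β / 2 * r ^ 2) := hsum
      _ ≤ n + ε * r + S * (β / 2 * r ^ 2) := by linarith
      _ < k * n := hfinal
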